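/- Let E, F be Banach spaces and f : E → F a C¹ map with first-order Taylor expansion f(ξ) = f(0) + Df(0)ξ + N(ξ), where Df(0) has a bounded right inverse G and there is a constant C > 0 such that ‖G N(ξ) − G N(ζ)‖ ≤ C(‖ξ‖ + ‖ζ‖)‖ξ − ζ‖ for all ξ, ζ ∈ E. Set δ₁ = (8C)⁻¹. If ‖G f(0)‖ ≤ δ₁/3, then for every ξ in ker Df(0) with ‖ξ‖ < δ₁ there exists φ(ξ) ∈ Im G with f(ξ + φ(ξ)) = 0 and ‖φ(ξ)‖ ≤ (4/3)‖G f(0)‖ + (1/3)‖ξ‖. -/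

import Mathlib

set_option maxHeartbeats 1000000 in
/-- Quantitative inverse function theorem in Banach spaces (Lemma 6.1.2). -/
theorem stmt_0 {E F : Type*} [NormedAddCommGroup E] [NormedSpace ℝ E] [CompleteSpace E]
    [NormedAddCommGroup F] [NormedSpace ℝ F] [CompleteSpace F]
    (f : E → F) (hf : ContDiff ℝ 1 f)
    (D : E →L[ℝ] F) (G : F →L[ℝ] E)
    (hG : ∀ y, D (G y) = y)
    (N : E → F)
    (hexp : ∀ ξ, f ξ = f 0 + D ξ + N ξ)
    (C : ℝ) (hC : 0 < C)
    (hN : ∀ ξ ζ : E, ‖G (N ξ) - G (N ζ)‖ ≤ C * (‖ξ‖ + ‖ζ‖) * ‖ξ - ζ‖)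
    (hsmall : ‖G (f 0)‖ ≤ (8 * C)⁻¹ / 3) :
    ∀ ξ ∈ LinearMap.ker (D : E →ₗ[ℝ] F), ‖ξ‖ < (8 * C)⁻¹ →
      ∃ φ ∈ Set.range G, f (ξ + φ) = 0 ∧
        ‖φ‖ ≤ (4 / 3) * ‖G (f 0)‖ + (1 / 3) * ‖ξ‖ := by
  intro ξ hξker hξ
  have hN0 : G (N 0) = 0 := by
    have h := hexp 0
    rw [map_zero, add_zero] at h
    have hN0' : N 0 = 0 := (left_eq_add.mp h)
    simp [hN0']
  have hNq : ∀ ζ : E, ‖G (N ζ)‖ ≤ C * ‖ζ‖ ^ 2 := by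
    intro ζ
    have h := hN ζ 0
    simp only [hN0, sub_zero, norm_zero, add_zero] at h
    calc ‖G (N ζ)‖ ≤ C * ‖ζ‖ * ‖ζ‖ := h
      _ = C * ‖ζ‖ ^ 2 := by ring
  set a := ‖G (f 0)‖ with ha
  set s := ‖ξ‖ with hs
  set r := (4 / 3) * a + (1 / 3) * s with hrdef
  have ha0 : 0 ≤ a := norm_nonneg _
  have hs0 : 0 ≤ s := norm_nonneg _
  have hr0 : 0 ≤ r := by positivity
  clear_value r s a
  have h8 : C * (8 * C)⁻¹ = 1 / 8 := by field_simp
  have hCs : C * s < 1 / 8 := by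
    have := mul_lt_mul_of_pos_left hξ hC
    rwa [h8] at this
  have hCa : C * a ≤ 1 / 24 := by
    have := mul_le_mul_of_nonneg_left hsmall hC.le
    calc C * a ≤ C * ((8 * C)⁻¹ / 3) := this
      _ = C * (8 * C)⁻¹ / 3 := by ring
      _ = 1 / 24 := by rw [h8]; norm_num
  set T : E → E := fun h => -(G (f 0)) - G (N (ξ + h)) with hT
  have hTball : ∀ h : E, ‖h‖ ≤ r → ‖T h‖ ≤ r := by
    intro h hh
    have h1 : ‖T h‖ ≤ a + C * ‖ξ + h‖ ^ 2 := by
      calc ‖T h‖ ≤ ‖-(G (f 0))‖ + ‖G (N (ξ + h))‖ := norm_sub_le _ _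
        _ = a + ‖G (N (ξ + h))‖ := by rw [norm_neg, ← ha]
        _ ≤ a + C * ‖ξ + h‖ ^ 2 := by linarith [hNq (ξ + h)]
    have h2 : ‖ξ + h‖ ≤ s + r := (norm_add_le _ _).trans (by linarith)
    have h3 : C * ‖ξ + h‖ ^ 2 ≤ C * (s + r) ^ 2 := by
      have := norm_nonneg (ξ + h)
      nlinarith
    have hCas : C * (a + s) ≤ 1 / 6 := by
      have e : C * (a + s) = C * a + C * s := by ring
      linarith
    have key : (1 / 6 - C * (a + s)) * (a + s) ≥ 0 :=
      mul_nonneg (by linarith) (by linarith)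
    have hsr : s + r = 4 / 3 * (a + s) := by rw [hrdef]; ring
    have hkey : C * (s + r) ^ 2 ≤ 16 / 54 * (a + s) := by
      rw [hsr]; nlinarith [key]
    rw [hrdef]
    linarith
  have hLip : ∀ h h' : E, ‖h‖ ≤ r → ‖h'‖ ≤ r →
      ‖T h - T h'‖ ≤ (4 / 9) * ‖h - h'‖ := by
    intro h h' hh hh'
    have e1 : T h - T h' = -(G (N (ξ + h)) - G (N (ξ + h'))) := by
      simp only [hT]; abel
    have e2 : (ξ + h) - (ξ + h') = h - h' := by abel
    have h1 : ‖T h - T h'‖ ≤ C * (‖ξ + h‖ + ‖ξ + h'‖) * ‖h - h'‖ := by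
      rw [e1, norm_neg]
      have := hN (ξ + h) (ξ + h')
      rwa [e2] at this
    have h2 : ‖ξ + h‖ ≤ s + r := (norm_add_le _ _).trans (by linarith)
    have h3 : ‖ξ + h'‖ ≤ s + r := (norm_add_le _ _).trans (by linarith)
    have h4 : C * (‖ξ + h‖ + ‖ξ + h'‖) ≤ 2 * C * (s + r) := by nlinarith
    have h5 : 2 * C * (s + r) ≤ 4 / 9 := by
      have : C * r = (4 / 3) * (C * a) + (1 / 3) * (C * s) := by rw [hrdef]; ring
      nlinarith
    have h6 : 0 ≤ ‖h - h'‖ := norm_nonneg _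
    have h7 : C * (‖ξ + h‖ + ‖ξ + h'‖) * ‖h - h'‖ ≤ 4 / 9 * ‖h - h'‖ :=
      mul_le_mul_of_nonneg_right (h4.trans h5) h6
    linarith
  -- Banach fixed point on the closed ball of radius r
  haveI : CompleteSpace (Metric.closedBall (0 : E) r) :=
    IsClosed.completeSpace_coe (hs := Metric.isClosed_closedBall)
  haveI : Nonempty (Metric.closedBall (0 : E) r) :=
    ⟨⟨0, by simp [hr0]⟩⟩
  have memiff : ∀ x : E, x ∈ Metric.closedBall (0 : E) r ↔ ‖x‖ ≤ r := by
    intro x; rw [Metric.mem_closedBall, dist_zero_right]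
  let T' : Metric.closedBall (0 : E) r → Metric.closedBall (0 : E) r :=
    fun h => ⟨T h, (memiff _).mpr (hTball h ((memiff _).mp h.2))⟩
  have hcontr : ContractingWith (⟨4 / 9, by norm_num⟩ : NNReal) T' := by
    constructor
    · exact (show (4 / 9 : ℝ) < 1 by norm_num)
    · apply LipschitzWith.of_dist_le_mul
      rintro ⟨x, hx⟩ ⟨y, hy⟩
      simp only [T', Subtype.dist_eq, dist_eq_norm, NNReal.coe_mk]
      exact hLip x y ((memiff _).mp hx) ((memiff _).mp hy)
  set z := hcontr.fixedPoint T' with hz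
  have hfix : T' z = z := hcontr.fixedPoint_isFixedPt
  set φ := (z : E) with hφ
  have hfix' : T φ = φ := congrArg Subtype.val hfix
  have hφnorm : ‖φ‖ ≤ r := (memiff _).mp z.2
  have hφG : φ = G (-(f 0 + N (ξ + φ))) := by
    conv_lhs => rw [← hfix']
    show -(G (f 0)) - G (N (ξ + φ)) = _
    rw [map_neg, map_add]
    abel
  refine ⟨φ, ⟨_, hφG.symm⟩, ?_, hφnorm⟩
  have hDφ : D φ = -(f 0 + N (ξ + φ)) := by
    conv_lhs => rw [hφG, hG]
  have hDξ : D ξ = 0 := LinearMap.mem_ker.mp hξker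
  rw [hexp (ξ + φ), map_add, hDξ, hDφ]
  abel
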